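/- For real x ∈ [-1, 1/(r-1)) and r ≥ 1, (1+x)^r ≤ 1 + rx/(1 - (r-1)x). -/

import Mathlib

/-- Bernoulli-type inequality: for `x ∈ [-1, 1/(r-1))` and `r ≥ 1`,
`(1+x)^r ≤ 1 + rx/(1-(r-1)x)`. -/
theorem bernoulli_upper (x r : ℝ) (hr : 1 ≤ r)
    (hx1 : -1 ≤ x) (hx2 : x < 1 / (r - 1)) :
    (1 + x) ^ r ≤ 1 + r * x / (1 - (r - 1) * x) := by
  have hr0 : (0:ℝ) < r := lt_of_lt_of_le zero_lt_one hr
  rcases eq_or_lt_of_le hx1 with h | h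
  · -- x = -1
    subst h
    have hA : 1 - (r - 1) * (-1) = r := by ring
    rw [add_neg_cancel, Real.zero_rpow hr0.ne', hA, mul_neg_one, neg_div,
      div_self hr0.ne']
    norm_num
  · -- -1 < x
    have hu : (0:ℝ) < 1 + x := by linarith
    have hA : (0:ℝ) < 1 - (r - 1) * x := by
      rcases eq_or_lt_of_le hr with h1 | h1
      · rw [← h1]; norm_num
      · have hr1 : (0:ℝ) < r - 1 := by linarith
        have : (r - 1) * x < (r - 1) * (1 / (r - 1)) :=
          mul_lt_mul_of_pos_left hx2 hr1
        rw [mul_one_div, div_self hr1.ne'] at this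
        linarith
    have hs : (-1:ℝ) ≤ -x / (1 + x) := by
      rw [le_div_iff₀ hu]; linarith
    have hb := one_add_mul_self_le_rpow_one_add hs hr
    have h1 : 1 + -x / (1 + x) = 1 / (1 + x) := by
      field_simp; ring
    rw [h1, Real.div_rpow zero_le_one hu.le, Real.one_rpow] at hb
    have h2 : 1 + r * (-x / (1 + x)) = (1 - (r - 1) * x) / (1 + x) := by
      field_simp; ring
    rw [h2] at hb
    have hur : (0:ℝ) < (1 + x) ^ r := Real.rpow_pos_of_pos hu r
    rw [div_le_div_iff₀ hu hur] at hb
    have h3 : 1 + r * x / (1 - (r - 1) * x) = (1 + x) / (1 - (r - 1) * x) := by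
      rw [eq_div_iff hA.ne', add_mul, div_mul_cancel₀ _ hA.ne']; ring
    rw [h3, le_div_iff₀ hA]
    nlinarith [hb]
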